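/- Let D be a digraph and let X ⊆ V(D) be such that the induced subdigraph D[X] is prime. Let u ∈ X, let x ∈ X_D(u), and let y ∈ (V(D) \ X) \ X_D(u). If {u,x} is not a module of D[X ∪ {x,y}], then D[X ∪ {x,y}] is prime. -/

import Mathlib

variable {V : Type*}

/-- `M` is a module of the simple graph `G`: every vertex outside `M` is adjacent
to every vertex of `M` or to no vertex of `M`. -/
def GraphModule (G : SimpleGraph V) (M : Set V) : Prop :=
  ∀ v ∉ M, (∀ x ∈ M, G.Adj v x) ∨ (∀ x ∈ M, ¬ G.Adj v x)

/-- `M` is a module of the digraph with arc relation `D`. -/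
def DigraphModule (D : V → V → Prop) (M : Set V) : Prop :=
  ∀ v ∉ M, ∀ x ∈ M, ∀ y ∈ M, (D v x ↔ D v y) ∧ (D x v ↔ D y v)

/-- The digraph `D` is an orientation of the simple graph `G`: there is an arc between
`x` and `y` (in exactly one direction) iff `x` and `y` are adjacent in `G`. -/
def IsOrientation (G : SimpleGraph V) (D : V → V → Prop) : Prop :=
  ∀ x y : V, ((D x y ∨ D y x) ↔ G.Adj x y) ∧ ¬ (D x y ∧ D y x)

/-- A graph is prime if it has at least 3 vertices and all its modules are trivial. -/
def GraphPrime [Fintype V] (G : SimpleGraph V) : Prop :=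
  3 ≤ Fintype.card V ∧
    ∀ M : Set V, GraphModule G M → M.Subsingleton ∨ M = Set.univ

/-- A digraph is prime if it has at least 3 vertices and all its modules are trivial. -/
def DigraphPrime [Fintype V] (D : V → V → Prop) : Prop :=
  3 ≤ Fintype.card V ∧
    ∀ M : Set V, DigraphModule D M → M.Subsingleton ∨ M = Set.univ

/-- A graph is primarily orientable if it admits a prime orientation. -/
def PrimarilyOrientable [Fintype V] (G : SimpleGraph V) : Prop :=
  ∃ D : V → V → Prop, IsOrientation G D ∧ DigraphPrime D

/-- `S` is a stable module (s-module) of `G`: a module of size at least 2 inducing no edges. -/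
def StableModule (G : SimpleGraph V) (S : Set V) : Prop :=
  GraphModule G S ∧ 2 ≤ S.ncard ∧ ∀ x ∈ S, ∀ y ∈ S, ¬ G.Adj x y

/-- The neighbourhood `N_G(M)` of a module `M`: the vertices outside `M` adjacent to
some (equivalently, every) vertex of `M`. -/
def modNbhd (G : SimpleGraph V) (M : Set V) : Set V :=
  {v | v ∉ M ∧ ∃ x ∈ M, G.Adj v x}

/-- `M` is a module of the subgraph of `G` induced on the vertex set `X`. -/
def ModuleOn (G : SimpleGraph V) (X M : Set V) : Prop :=
  M ⊆ X ∧ ∀ v ∈ X \ M, (∀ x ∈ M, G.Adj v x) ∨ (∀ x ∈ M, ¬ G.Adj v x)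

/-- `S` is an s-duo (stable module of size 2) of the subgraph of `G` induced on `X`. -/
def SduoOn (G : SimpleGraph V) (X S : Set V) : Prop :=
  ModuleOn G X S ∧ S.ncard = 2 ∧ ∀ x ∈ S, ∀ y ∈ S, ¬ G.Adj x y

/-- `S` is an s-duo of `G`. -/
def Sduo (G : SimpleGraph V) (S : Set V) : Prop :=
  SduoOn G Set.univ S

/-- `G` has no s-duo. -/
def SduoFree (G : SimpleGraph V) : Prop := ∀ S : Set V, ¬ Sduo G S

/-- `M` is a module of the subdigraph of `D` induced on the vertex set `X`. -/
def DModuleOn (D : V → V → Prop) (X M : Set V) : Prop :=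
  M ⊆ X ∧ ∀ v ∈ X \ M, ∀ x ∈ M, ∀ y ∈ M, (D v x ↔ D v y) ∧ (D x v ↔ D y v)

/-- The subdigraph of `D` induced on `X` is prime. -/
def DPrimeOn (D : V → V → Prop) (X : Set V) : Prop :=
  3 ≤ X.ncard ∧ ∀ M : Set V, DModuleOn D X M → M.Subsingleton ∨ M = X

/-- `Ext_D(X)`: vertices `v ∉ X` such that `D[X ∪ {v}]` is prime. -/
def ExtD (D : V → V → Prop) (X : Set V) : Set V :=
  {v | v ∉ X ∧ DPrimeOn D (X ∪ {v})}

/-- `⟨X⟩_D`: vertices `v ∉ X` such that `X` is a module of `D[X ∪ {v}]`. -/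
def InnD (D : V → V → Prop) (X : Set V) : Set V :=
  {v | v ∉ X ∧ DModuleOn D (X ∪ {v}) X}

/-- `X_D(u)`: vertices `v ∉ X` such that `{u, v}` is a module of `D[X ∪ {v}]`. -/
def AttD (D : V → V → Prop) (X : Set V) (u : V) : Set V :=
  {v | v ∉ X ∧ DModuleOn D (X ∪ {v}) ({u, v} : Set V)}


private lemma pairMod {D : V → V → Prop} {v p q : V}
    (h1 : D v p ↔ D v q) (h2 : D p v ↔ D q v) :
    ∀ a ∈ ({p, q} : Set V), ∀ b ∈ ({p, q} : Set V),
      (D v a ↔ D v b) ∧ (D a v ↔ D b v) := by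
  rintro a (rfl | rfl) b (rfl | rfl) <;>
    exact ⟨by first | exact Iff.rfl | exact h1 | exact h1.symm,
           by first | exact Iff.rfl | exact h2 | exact h2.symm⟩

/-- Lemma (ER, 6.3/6.4, assertion 2): if `u ∈ X`, `x ∈ X_D(u)`, `y ∉ X ∪ X_D(u)`,
and `{u, x}` is not a module of `D[X ∪ {x, y}]`, then `D[X ∪ {x, y}]` is prime. -/
theorem prime_extension_att [Fintype V] (D : V → V → Prop)
    (X : Set V) (hX : DPrimeOn D X)
    (u : V) (hu : u ∈ X)
    (x : V) (hx : x ∈ AttD D X u)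
    (y : V) (hy : y ∈ Xᶜ \ AttD D X u)
    (hmod : ¬ DModuleOn D (X ∪ {x, y}) ({u, x} : Set V)) :
    DPrimeOn D (X ∪ {x, y}) := by
  obtain ⟨hxX, hxM⟩ := hx
  have hyX : y ∉ X := hy.1
  have hyA : ¬ DModuleOn D (X ∪ {y}) ({u, y} : Set V) := fun h => hy.2 ⟨hyX, h⟩
  have hux : u ≠ x := fun h => hxX (h ▸ hu)
  have huy : u ≠ y := fun h => hyX (h ▸ hu)
  have hxy : x ≠ y := fun h => hy.2 ⟨hyX, h ▸ hxM⟩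
  -- pointwise consequences of `{u, x}` being a module of `D[X ∪ {x}]`
  have hx2 : ∀ v ∈ X, v ≠ u → (D v u ↔ D v x) ∧ (D u v ↔ D x v) := by
    intro v hv hvu
    refine hxM.2 v ⟨Or.inl hv, ?_⟩ u (Or.inl rfl) x (Or.inr rfl)
    rintro (rfl | rfl)
    · exact hvu rfl
    · exact hxX hv
  obtain ⟨hX3, hXprime⟩ := hX
  refine ⟨?_, ?_⟩
  · calc (3 : ℕ) ≤ X.ncard := hX3
      _ ≤ (X ∪ {x, y}).ncard := Set.ncard_le_ncard Set.subset_union_left (Set.toFinite _)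
  intro M hM
  by_cases hMs : M.Subsingleton
  · exact Or.inl hMs
  right
  obtain ⟨a₀, ha₀, b₀, hb₀, hab₀⟩ := Set.not_subsingleton_iff.mp hMs
  -- restriction of M to X is a module of D[X]
  have hMX : DModuleOn D X (M ∩ X) := by
    refine ⟨Set.inter_subset_right, ?_⟩
    intro v hv a ha b hb
    exact hM.2 v ⟨Or.inl hv.1, fun hvM => hv.2 ⟨hvM, hv.1⟩⟩ a ha.1 b hb.1
  have hWx : x ∈ X ∪ ({x, y} : Set V) := Or.inr (Or.inl rfl)
  have hWy : y ∈ X ∪ ({x, y} : Set V) := Or.inr (Or.inr rfl)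
  rcases hXprime (M ∩ X) hMX with hss | hall
  · -- Case B : M ∩ X is a subsingleton
    exfalso
    by_cases hxMem : x ∈ M
    · by_cases hw : ∃ w, w ∈ M ∩ X ∧ w ≠ u
      · -- a vertex w ≠ u in M ∩ X together with x gives the module {u, w} of D[X]
        obtain ⟨w, ⟨hwM, hwX⟩, hwu⟩ := hw
        have huwmod : DModuleOn D X ({u, w} : Set V) := by
          refine ⟨?_, ?_⟩
          · rintro z (rfl | rfl)
            exacts [hu, hwX]
          intro v hv
          have hvX := hv.1
          have hvu : v ≠ u := fun h => hv.2 (Or.inl h)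
          have hvw : v ≠ w := fun h => hv.2 (Or.inr h)
          have hvM : v ∉ M := fun h => hvw (hss ⟨h, hvX⟩ ⟨hwM, hwX⟩)
          have h1 := hx2 v hvX hvu
          have h2 := hM.2 v ⟨Or.inl hvX, hvM⟩ x hxMem w hwM
          exact pairMod (h1.1.trans h2.1) (h1.2.trans h2.2)
        rcases hXprime _ huwmod with h | h
        · exact hwu (h (Or.inr rfl) (Or.inl rfl))
        · have : X.ncard ≤ 2 := by
            rw [← h]
            calc ({u, w} : Set V).ncard ≤ ({w} : Set V).ncard + 1 := Set.ncard_insert_le _ _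
              _ = 2 := by rw [Set.ncard_singleton]
          omega
      · push_neg at hw
        have hMXu : ∀ z ∈ M, z ∈ X → z = u := fun z hz hzX => hw z ⟨hz, hzX⟩
        by_cases huM : u ∈ M
        · by_cases hyMem : y ∈ M
          · -- M ⊇ {u, x, y} forces y ∈ AttD, contradiction
            apply hyA
            refine ⟨?_, ?_⟩
            · rintro z (rfl | rfl)
              exacts [Or.inl hu, Or.inr rfl]
            intro v hv
            have hvX : v ∈ X := by
              rcases hv.1 with h | h
              · exact h
              · exact absurd (Or.inr h) hv.2
            have hvu : v ≠ u := fun h => hv.2 (Or.inl h)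
            have hvM : v ∉ M := fun h => hvu (hMXu v h hvX)
            have h2 := hM.2 v ⟨Or.inl hvX, hvM⟩ u huM y hyMem
            exact pairMod h2.1 h2.2
          · -- M = {u, x} is a module of D[X ∪ {x, y}], contradicting hmod
            apply hmod
            refine ⟨?_, ?_⟩
            · rintro z (rfl | rfl)
              exacts [Or.inl hu, hWx]
            intro v hv
            rcases hv.1 with hvX | (rfl | rfl)
            · have hvu : v ≠ u := fun h => hv.2 (Or.inl h)
              have h1 := hx2 v hvX hvu
              exact pairMod h1.1 h1.2
            · exact absurd (Or.inr rfl) hv.2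
            · have h2 := hM.2 v ⟨hWy, hyMem⟩ u huM x hxMem
              exact pairMod h2.1 h2.2
        · -- M ∩ X = ∅, so M = {x, y} and y ∈ AttD, contradiction
          have hMxy : ∀ z ∈ M, z = x ∨ z = y := by
            intro z hz
            rcases hM.1 hz with hzX | h
            · exact absurd (hMXu z hz hzX ▸ hz) huM
            · exact h
          have hyMem : y ∈ M := by
            rcases hMxy a₀ ha₀ with rfl | rfl
            · rcases hMxy b₀ hb₀ with rfl | rfl
              · exact absurd rfl hab₀
              · exact hb₀
            · exact ha₀
          apply hyA
          refine ⟨?_, ?_⟩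
          · rintro z (rfl | rfl)
            exacts [Or.inl hu, Or.inr rfl]
          intro v hv
          have hvX : v ∈ X := by
            rcases hv.1 with h | h
            · exact h
            · exact absurd (Or.inr h) hv.2
          have hvu : v ≠ u := fun h => hv.2 (Or.inl h)
          have hvM : v ∉ M := fun h => huM (hMXu v h hvX ▸ h)
          have h1 := hx2 v hvX hvu
          have h2 := hM.2 v ⟨Or.inl hvX, hvM⟩ x hxMem y hyMem
          exact pairMod (h1.1.trans h2.1) (h1.2.trans h2.2)
    · -- Case B2 : x ∉ M, so M = {w, y} with w ∈ X
      have hMXy : ∀ z ∈ M, z ∈ X ∨ z = y := by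
        intro z hz
        rcases hM.1 hz with hzX | (rfl | rfl)
        · exact Or.inl hzX
        · exact absurd hz hxMem
        · exact Or.inr rfl
      obtain ⟨w, hwM, hwX, hyM⟩ : ∃ w, w ∈ M ∧ w ∈ X ∧ y ∈ M := by
        rcases hMXy a₀ ha₀ with ha | rfl
        · rcases hMXy b₀ hb₀ with hb | rfl
          · exact absurd (hss ⟨ha₀, ha⟩ ⟨hb₀, hb⟩) hab₀
          · exact ⟨a₀, ha₀, ha, hb₀⟩
        · rcases hMXy b₀ hb₀ with hb | rfl
          · exact ⟨b₀, hb₀, hb, ha₀⟩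
          · exact absurd rfl hab₀
      by_cases hwu : w = u
      · -- w = u : then {u, y} is a module of D[X ∪ {y}], contradiction
        subst hwu
        apply hyA
        refine ⟨?_, ?_⟩
        · rintro z (rfl | rfl)
          exacts [Or.inl hu, Or.inr rfl]
        intro v hv
        have hvX : v ∈ X := by
          rcases hv.1 with h | h
          · exact h
          · exact absurd (Or.inr h) hv.2
        have hvw : v ≠ w := fun h => hv.2 (Or.inl h)
        have hvM : v ∉ M := fun h => hvw (hss ⟨h, hvX⟩ ⟨hwM, hwX⟩)
        have h2 := hM.2 v ⟨Or.inl hvX, hvM⟩ w hwM y hyM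
        exact pairMod h2.1 h2.2
      · -- w ≠ u : the chain argument shows {u, x} is a module of D[X ∪ {x, y}]
        have huM : u ∉ M := fun h => hwu (hss ⟨hwM, hwX⟩ ⟨h, hu⟩)
        apply hmod
        refine ⟨?_, ?_⟩
        · rintro z (rfl | rfl)
          exacts [Or.inl hu, hWx]
        intro v hv
        rcases hv.1 with hvX | (rfl | rfl)
        · have hvu : v ≠ u := fun h => hv.2 (Or.inl h)
          have h1 := hx2 v hvX hvu
          exact pairMod h1.1 h1.2
        · exact absurd (Or.inr rfl) hv.2
        · have h1 := hM.2 u ⟨Or.inl hu, huM⟩ w hwM v hyM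
          have h2 := hM.2 x ⟨hWx, hxMem⟩ w hwM v hyM
          have h3 := hx2 w hwX hwu
          exact pairMod (h1.2.symm.trans (h3.1.trans h2.2))
            (h1.1.symm.trans (h3.2.trans h2.1))
  · -- Case A : M ∩ X = X, i.e. X ⊆ M
    have hXM : X ⊆ M := fun z hz => (hall.symm ▸ hz : z ∈ M ∩ X).1
    by_cases hxMem : x ∈ M
    · by_cases hyMem : y ∈ M
      · -- M = X ∪ {x, y}
        refine Set.Subset.antisymm hM.1 ?_
        rintro z (hz | (rfl | rfl))
        exacts [hXM hz, hxMem, hyMem]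
      · -- y ∉ M : then {u, x} is a module of D[X ∪ {x, y}], contradiction
        exfalso
        apply hmod
        refine ⟨?_, ?_⟩
        · rintro z (rfl | rfl)
          exacts [Or.inl hu, hWx]
        intro v hv
        rcases hv.1 with hvX | (rfl | rfl)
        · have hvu : v ≠ u := fun h => hv.2 (Or.inl h)
          have h1 := hx2 v hvX hvu
          exact pairMod h1.1 h1.2
        · exact absurd (Or.inr rfl) hv.2
        · have h2 := hM.2 v ⟨hWy, hyMem⟩ u (hXM hu) x hxMem
          exact pairMod h2.1 h2.2
    · -- x ∉ M : then X \ {u} is a module of D[X], contradicting primeness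
      exfalso
      have hdiff : DModuleOn D X (X \ {u}) := by
        refine ⟨Set.diff_subset, ?_⟩
        intro v hv a ha b hb
        have hvu : v = u := by
          by_contra h
          exact hv.2 ⟨hv.1, h⟩
        subst hvu
        have hau := hx2 a ha.1 ha.2
        have hbu := hx2 b hb.1 hb.2
        have hab := hM.2 x ⟨hWx, hxMem⟩ a (hXM ha.1) b (hXM hb.1)
        exact ⟨hau.2.trans (hab.1.trans hbu.2.symm),
               hau.1.trans (hab.2.trans hbu.1.symm)⟩
      rcases hXprime _ hdiff with h | h
      · have h1 : (X \ {u}).ncard = X.ncard - 1 :=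
          Set.ncard_diff_singleton_of_mem hu
        have h2 : (X \ {u}).ncard ≤ 1 := (Set.ncard_le_one (Set.toFinite _)).mpr
          fun a ha b hb => h ha hb
        omega
      · have : u ∈ X \ {u} := h.symm ▸ hu
        exact this.2 rfl
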